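/- Consider the modified Arnold map with lift G(x,α,β,γ) = x + α + β sin(2πx) + γ cos(4πx) along the path α(μ) = (1 + u²/2)μ, β(μ) = 2uμ, γ(μ) = −(u²/2)μ, for a fixed u ∈ (−1/2, 1/2). Then the rotation number ρ(μ) is differentiable at μ = 0 and ρ'(0) = (1 − u²)^{3/2}. -/

import Mathlib

open Filter Real

/-- `r` is the rotation number of the lift `F`, i.e. `(Fⁿ(0) - 0)/n → r`. -/
def HasRotNum (F : ℝ → ℝ) (r : ℝ) : Prop :=
  Filter.Tendsto (fun n : ℕ => F^[n] 0 / n) Filter.atTop (nhds r)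

noncomputable def qq (u θ : ℝ) : ℝ :=
  2 * Real.arctan (u * Real.cos θ / (1 + Real.sqrt (1 - u^2) + u * Real.sin θ))
    + Real.sqrt (1 - u^2) * u * Real.cos θ / (1 + u * Real.sin θ)

noncomputable def HH (u x : ℝ) : ℝ := x + qq u (2 * π * x) / (2 * π)

noncomputable def fA (u x : ℝ) : ℝ := (1 + u * Real.sin (2 * π * x))^2

lemma one_add_pos (u θ : ℝ) (hu : |u| < 1/2) : (1:ℝ)/2 ≤ 1 + u * Real.sin θ := by
  have h1 : |u * Real.sin θ| ≤ 1/2 := by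
    rw [abs_mul]
    calc |u| * |Real.sin θ| ≤ (1/2) * 1 :=
      mul_le_mul hu.le (Real.abs_sin_le_one θ) (abs_nonneg _) (by norm_num)
    _ = 1/2 := by ring
  have := neg_abs_le (u * Real.sin θ)
  linarith

lemma one_add_le (u θ : ℝ) (hu : |u| < 1/2) : 1 + u * Real.sin θ ≤ 3/2 := by
  have h1 : |u * Real.sin θ| ≤ 1/2 := by
    rw [abs_mul]
    calc |u| * |Real.sin θ| ≤ (1/2) * 1 :=
      mul_le_mul hu.le (Real.abs_sin_le_one θ) (abs_nonneg _) (by norm_num)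
    _ = 1/2 := by ring
  have := le_abs_self (u * Real.sin θ)
  linarith

lemma sin_lip (a b : ℝ) : |Real.sin a - Real.sin b| ≤ |a - b| := by
  rw [Real.sin_sub_sin, abs_mul, abs_mul, abs_two]
  have h1 := Real.abs_sin_le_abs (x := (a-b)/2)
  have h2 := Real.abs_cos_le_one ((a+b)/2)
  have h3 : |(a-b)/2| = |a-b|/2 := by rw [abs_div, abs_two]
  have h4 := abs_nonneg (Real.sin ((a-b)/2))
  have h5 := abs_nonneg (Real.cos ((a+b)/2))
  nlinarith [abs_nonneg (a-b)]

lemma fA_lb (u x : ℝ) (hu : |u| < 1/2) : (1:ℝ)/4 ≤ fA u x := by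
  have := one_add_pos u (2*π*x) hu
  unfold fA; nlinarith

lemma fA_ub (u x : ℝ) (hu : |u| < 1/2) : fA u x ≤ 9/4 := by
  have h1 := one_add_pos u (2*π*x) hu
  have h2 := one_add_le u (2*π*x) hu
  unfold fA; nlinarith

set_option maxHeartbeats 1000000 in
lemma qq_deriv (u : ℝ) (hu : |u| < 1/2) (θ : ℝ) :
    HasDerivAt (qq u)
      (Real.sqrt (1 - u^2) ^ 3 / (1 + u * Real.sin θ)^2 - 1) θ := by
  set s := Real.sqrt (1 - u^2) with hsdef
  have hu2 : u^2 < 1 := by nlinarith [abs_nonneg u, sq_abs u, hu]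
  have hs2 : s^2 = 1 - u^2 := Real.sq_sqrt (by linarith)
  have hspos : 0 < s := Real.sqrt_pos.2 (by linarith)
  have hP : (1:ℝ)/2 ≤ 1 + u * Real.sin θ := one_add_pos u θ hu
  have hPne : (1 + u * Real.sin θ) ≠ 0 := by linarith
  have hDpos : 0 < 1 + s + u * Real.sin θ := by
    have := one_add_pos u θ hu; linarith
  have hDne : (1 + s + u * Real.sin θ) ≠ 0 := ne_of_gt hDpos
  have hN : HasDerivAt (fun t => u * Real.cos t) (u * (-Real.sin θ)) θ :=
    (Real.hasDerivAt_cos θ).const_mul u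
  have hD : HasDerivAt (fun t => 1 + s + u * Real.sin t) (u * Real.cos θ) θ := by
    simpa using ((Real.hasDerivAt_sin θ).const_mul u).const_add (1 + s)
  have hr : HasDerivAt (fun t => u * Real.cos t / (1 + s + u * Real.sin t))
      ((u * (-Real.sin θ) * (1 + s + u * Real.sin θ) - u * Real.cos θ * (u * Real.cos θ)) /
        (1 + s + u * Real.sin θ)^2) θ := hN.div hD hDne
  have harc : HasDerivAt (fun t => 2 * Real.arctan (u * Real.cos t / (1 + s + u * Real.sin t)))
      (2 * ((1 / (1 + (u * Real.cos θ / (1 + s + u * Real.sin θ))^2)) *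
        ((u * (-Real.sin θ) * (1 + s + u * Real.sin θ) - u * Real.cos θ * (u * Real.cos θ)) /
          (1 + s + u * Real.sin θ)^2))) θ :=
    ((Real.hasDerivAt_arctan _).comp θ hr).const_mul 2
  have hN2 : HasDerivAt (fun t => s * u * Real.cos t) (s * u * (-Real.sin θ)) θ :=
    (Real.hasDerivAt_cos θ).const_mul (s * u)
  have hD2 : HasDerivAt (fun t => 1 + u * Real.sin t) (u * Real.cos θ) θ := by
    simpa using ((Real.hasDerivAt_sin θ).const_mul u).const_add 1
  have hr2 : HasDerivAt (fun t => s * u * Real.cos t / (1 + u * Real.sin t))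
      ((s * u * (-Real.sin θ) * (1 + u * Real.sin θ) - s * u * Real.cos θ * (u * Real.cos θ)) /
        (1 + u * Real.sin θ)^2) θ := hN2.div hD2 hPne
  have := harc.add hr2
  refine this.congr_deriv ?_
  set S := Real.sin θ
  set C := Real.cos θ
  have hC : C^2 = 1 - S^2 := Real.cos_sq' θ
  have hDN : (1 + s + u*S)^2 + (u*C)^2 = 2*(1+s)*(1+u*S) := by
    linear_combination hs2 + u^2 * hC
  have h1 : (1 + (u * C / (1 + s + u * S))^2) = (2*(1+s)*(1+u*S)) / (1 + s + u*S)^2 := by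
    rw [← hDN]; field_simp
  have hX : u * (-S) * (1 + s + u*S) - u*C*(u*C) = (s - 1 - u*S)*(1+s) := by
    linear_combination -hs2 - u^2 * hC
  have hkey : 2 * ((1 / ((2*(1+s)*(1+u*S)) / (1 + s + u*S)^2)) *
      ((u * (-S) * (1 + s + u*S) - u*C*(u*C)) / (1 + s + u*S)^2))
      = (s - 1 - u*S)/(1+u*S) := by
    rw [hX]
    have h1s : (0:ℝ) < 1 + s := by linarith
    field_simp
  rw [h1, hkey]
  rw [div_add_div _ _ (by positivity) (by positivity), div_sub_one (by positivity),
    div_eq_div_iff (by positivity) (by positivity)]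
  linear_combination (-(s * hs2 + s * u^2 * hC)) * ((1+u*S)*(1+u*S)^2)

lemma HH_deriv (u : ℝ) (hu : |u| < 1/2) (x : ℝ) :
    HasDerivAt (HH u) (Real.sqrt (1 - u^2) ^ 3 / fA u x) x := by
  have hin : HasDerivAt (fun x : ℝ => 2 * π * x) (2 * π) x := by
    simpa using (hasDerivAt_id x).const_mul (2 * π)
  have h1 : HasDerivAt (fun x : ℝ => qq u (2 * π * x))
      ((Real.sqrt (1 - u^2) ^ 3 / (1 + u * Real.sin (2 * π * x))^2 - 1) * (2 * π)) x :=
    (qq_deriv u hu (2 * π * x)).comp x hin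
  have h2 := (hasDerivAt_id x).add (h1.div_const (2 * π))
  have hπ : (2 * π) ≠ 0 := by positivity
  refine h2.congr_deriv ?_
  unfold fA
  field_simp
  ring

lemma HH_lip (u : ℝ) (hu : |u| < 1/2) (x y : ℝ) :
    |Real.sqrt (1 - u^2) ^ 3 / fA u x - Real.sqrt (1 - u^2) ^ 3 / fA u y|
      ≤ 160 * |x - y| := by
  set s := Real.sqrt (1 - u^2) with hsdef
  have hs1 : s ≤ 1 := Real.sqrt_le_one.mpr (by nlinarith [sq_nonneg u])
  have hs0 : 0 ≤ s := Real.sqrt_nonneg _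
  have hfx := fA_lb u x hu
  have hfy := fA_lb u y hu
  have hfxne : fA u x ≠ 0 := by linarith
  have hfyne : fA u y ≠ 0 := by linarith
  have heq : s ^ 3 / fA u x - s ^ 3 / fA u y = s ^ 3 * (fA u y - fA u x) / (fA u x * fA u y) := by
    field_simp
  rw [heq, abs_div]
  have hden : |fA u x * fA u y| = fA u x * fA u y := abs_of_pos (by nlinarith)
  rw [hden, div_le_iff₀ (by nlinarith)]
  -- |fA y - fA x| ≤ 10 |y - x|
  have hsin : |Real.sin (2*π*y) - Real.sin (2*π*x)| ≤ |2*π*y - 2*π*x| :=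
    sin_lip _ _
  have hπ : π ≤ 3.15 := by linarith [Real.pi_lt_d2]
  have hπ0 : 0 < π := Real.pi_pos
  have hdiff : |fA u y - fA u x| ≤ 10 * |x - y| := by
    have hfact : fA u y - fA u x =
        (2 + u * (Real.sin (2*π*y) + Real.sin (2*π*x))) * (u * (Real.sin (2*π*y) - Real.sin (2*π*x))) := by
      unfold fA; ring
    rw [hfact, abs_mul, abs_mul]
    have h1 : |2 + u * (Real.sin (2*π*y) + Real.sin (2*π*x))| ≤ 3 := by
      have ha : |u * (Real.sin (2*π*y) + Real.sin (2*π*x))| ≤ 1 := by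
        rw [abs_mul]
        have : |Real.sin (2*π*y) + Real.sin (2*π*x)| ≤ 2 := by
          calc |Real.sin (2*π*y) + Real.sin (2*π*x)| ≤ |Real.sin (2*π*y)| + |Real.sin (2*π*x)| := abs_add_le _ _
          _ ≤ 1 + 1 := add_le_add (Real.abs_sin_le_one _) (Real.abs_sin_le_one _)
          _ = 2 := by norm_num
        nlinarith [abs_nonneg u, hu.le]
      calc |2 + u * (Real.sin (2*π*y) + Real.sin (2*π*x))|
          ≤ |(2:ℝ)| + |u * (Real.sin (2*π*y) + Real.sin (2*π*x))| := abs_add_le _ _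
        _ ≤ 2 + 1 := by rw [abs_two]; linarith
        _ = 3 := by norm_num
    have h2 : |u| * |Real.sin (2*π*y) - Real.sin (2*π*x)| ≤ (1/2) * (2*π*|y - x|) := by
      have h2' : |2*π*y - 2*π*x| = 2*π*|y-x| := by
        rw [show 2*π*y - 2*π*x = (2*π)*(y-x) by ring, abs_mul, abs_of_pos (by positivity)]
      apply mul_le_mul hu.le (by rw [← h2']; exact hsin) (abs_nonneg _) (by norm_num)
    calc |2 + u * (Real.sin (2*π*y) + Real.sin (2*π*x))| * (|u| * |Real.sin (2*π*y) - Real.sin (2*π*x)|)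
        ≤ 3 * ((1/2) * (2*π*|y - x|)) := by
          apply mul_le_mul h1 h2 (by positivity) (by norm_num)
      _ = 3 * π * |y - x| := by ring
      _ ≤ 10 * |x - y| := by rw [abs_sub_comm x y]; nlinarith [abs_nonneg (y - x)]

  have hnum : |s ^ 3 * (fA u y - fA u x)| ≤ 10 * |x - y| := by
    rw [abs_mul]
    have hs3 : |s ^ 3| ≤ 1 := by
      rw [abs_of_nonneg (by positivity)]
      exact pow_le_one₀ hs0 hs1
    nlinarith [abs_nonneg (fA u y - fA u x), abs_nonneg (x - y)]
  have hge : (1:ℝ)/16 ≤ fA u x * fA u y := by nlinarith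
  nlinarith [abs_nonneg (x - y)]

lemma HH_taylor (u : ℝ) (hu : |u| < 1/2) (x h : ℝ) :
    |HH u (x + h) - HH u x - (Real.sqrt (1 - u^2) ^ 3 / fA u x) * h| ≤ 160 * h^2 := by
  set s := Real.sqrt (1 - u^2) with hsdef
  set g : ℝ → ℝ := fun y => s ^ 3 / fA u y with hg
  set φ : ℝ → ℝ := fun y => HH u y - g x * y with hφ
  have hd : ∀ y, HasDerivAt φ (g y - g x) y := fun y => by
    have := (HH_deriv u hu y).sub ((hasDerivAt_id y).const_mul (g x))
    exact this.congr_deriv (by simp [hg]; rfl)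
  have hmem : ∀ y ∈ Set.uIcc x (x + h), |y - x| ≤ |h| := by
    intro y hy
    rcases le_total 0 h with h0 | h0
    · rw [Set.uIcc_of_le (by linarith)] at hy
      rw [abs_of_nonneg (by linarith [hy.1]), abs_of_nonneg h0]
      linarith [hy.2]
    · rw [Set.uIcc_of_ge (by linarith)] at hy
      rw [abs_of_nonpos (by linarith [hy.2]), abs_of_nonpos h0]
      linarith [hy.1]
  have key : ‖φ (x + h) - φ x‖ ≤ (160 * |h|) * ‖(x + h) - x‖ := by
    apply Convex.norm_image_sub_le_of_norm_hasDerivWithin_le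
      (fun y _ => (hd y).hasDerivWithinAt)
      (fun y hy => ?_) (convex_uIcc _ _) Set.left_mem_uIcc Set.right_mem_uIcc
    have := HH_lip u hu y x
    have h2 := hmem y hy
    simp only [Real.norm_eq_abs]
    calc |g y - g x| ≤ 160 * |y - x| := HH_lip u hu y x
      _ ≤ 160 * |h| := by linarith
  have hsimp : φ (x + h) - φ x = HH u (x + h) - HH u x - g x * h := by
    simp only [hφ]; ring
  rw [hsimp] at key
  simp only [Real.norm_eq_abs, add_sub_cancel_left] at key
  calc |HH u (x + h) - HH u x - (s ^ 3 / fA u x) * h| ≤ 160 * |h| * |h| := key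
    _ = 160 * h^2 := by rw [mul_assoc, ← abs_mul, ← sq, abs_of_nonneg (sq_nonneg h)]

lemma HH_step (u : ℝ) (hu : |u| < 1/2) (x μ : ℝ) :
    |HH u (x + μ * fA u x) - HH u x - Real.sqrt (1 - u^2) ^ 3 * μ| ≤ 810 * μ^2 := by
  have hfx := fA_lb u x hu
  have hfne : fA u x ≠ 0 := by linarith
  have := HH_taylor u hu x (μ * fA u x)
  have heq : (Real.sqrt (1 - u^2) ^ 3 / fA u x) * (μ * fA u x) = Real.sqrt (1 - u^2) ^ 3 * μ := by
    field_simp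
  rw [heq] at this
  have hub := fA_ub u x hu
  have hmain : |HH u (x + μ * fA u x) - HH u x - Real.sqrt (1 - u^2) ^ 3 * μ| ≤ 160 * (μ * fA u x)^2 := this
  have he : (μ * fA u x)^2 = μ^2 * (fA u x)^2 := by ring
  have hf2 : (fA u x)^2 ≤ 81/16 := by nlinarith
  have : μ^2 * (fA u x)^2 ≤ μ^2 * (81/16) := by nlinarith [sq_nonneg μ]
  linarith [hmain, he ▸ this]

lemma HH_dist (u : ℝ) (hu : |u| < 1/2) (x : ℝ) : |HH u x - x| ≤ 2 := by
  have hπ0 : 0 < π := Real.pi_pos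
  have hπ3 : 3 < π := Real.pi_gt_three
  have hP := one_add_pos u (2*π*x) hu
  have hs1 : Real.sqrt (1 - u^2) ≤ 1 := Real.sqrt_le_one.mpr (by nlinarith [sq_nonneg u])
  have hs0 : 0 ≤ Real.sqrt (1 - u^2) := Real.sqrt_nonneg _
  have harct : |Real.arctan (u * Real.cos (2*π*x) /
      (1 + Real.sqrt (1 - u^2) + u * Real.sin (2*π*x)))| ≤ π/2 := by
    apply abs_le.2 ⟨(Real.neg_pi_div_two_lt_arctan _).le, (Real.arctan_lt_pi_div_two _).le⟩
  have hfrac : |Real.sqrt (1 - u^2) * u * Real.cos (2*π*x) / (1 + u * Real.sin (2*π*x))| ≤ 1 := by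
    rw [abs_div, abs_of_pos (by linarith : (0:ℝ) < 1 + u * Real.sin (2*π*x)),
      div_le_iff₀ (by linarith)]
    have : |Real.sqrt (1 - u^2) * u * Real.cos (2*π*x)| ≤ 1/2 := by
      rw [abs_mul, abs_mul, abs_of_nonneg hs0]
      have h1 : Real.sqrt (1 - u^2) * |u| ≤ 1/2 := by nlinarith [abs_nonneg u]
      have h2 := Real.abs_cos_le_one (2*π*x)
      nlinarith [abs_nonneg (Real.cos (2*π*x)), mul_nonneg hs0 (abs_nonneg u)]
    linarith
  have hq : |qq u (2*π*x)| ≤ π + 1 := by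
    unfold qq
    calc |2 * Real.arctan _ + _| ≤ |2 * Real.arctan _| + |Real.sqrt (1 - u^2) * u * Real.cos (2*π*x) / (1 + u * Real.sin (2*π*x))| := abs_add_le _ _
      _ ≤ 2 * (π/2) + 1 := by
          rw [abs_mul, abs_two]
          exact add_le_add (by linarith [harct, mul_le_mul_of_nonneg_left harct (by norm_num : (0:ℝ) ≤ 2)]) hfrac
      _ = π + 1 := by ring
  have : |HH u x - x| = |qq u (2*π*x)| / (2*π) := by
    unfold HH
    rw [add_sub_cancel_left, abs_div, abs_of_pos (by positivity : (0:ℝ) < 2*π)]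
  rw [this, div_le_iff₀ (by positivity)]
  nlinarith

theorem modified_arnold_map_derivative_special_path
    (u : ℝ) (hu : u ∈ Set.Ioo (-(1/2) : ℝ) (1/2))
    (ε : ℝ) (hε : 0 < ε)
    (ρ : ℝ → ℝ)
    (hρ : ∀ μ : ℝ, |μ| < ε →
      HasRotNum (fun x => x + (1 + u ^ 2 / 2) * μ + 2 * u * μ * Real.sin (2 * π * x)
        - u ^ 2 / 2 * μ * Real.cos (4 * π * x)) (ρ μ)) :
    HasDerivAt ρ ((1 - u ^ 2) ^ ((3 : ℝ) / 2)) 0 := by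
  have hu' : |u| < 1/2 := abs_lt.2 ⟨by linarith [hu.1], hu.2⟩
  set s := Real.sqrt (1 - u^2) with hsdef
  set c := s ^ 3 with hcdef
  have hu2 : u^2 < 1 := by nlinarith [abs_nonneg u, sq_abs u, hu']
  have hc_eq : (1 - u ^ 2) ^ ((3 : ℝ) / 2) = c := by
    rw [hcdef, hsdef, show ((3:ℝ)/2) = (1/2 : ℝ) * (3:ℕ) by norm_num,
      Real.rpow_mul (by linarith), Real.rpow_natCast, ← Real.sqrt_eq_rpow]
  -- key estimate
  have key : ∀ μ : ℝ, |μ| < ε → |ρ μ - c * μ| ≤ 810 * μ^2 := by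
    intro μ hμ
    have hmap : (fun x => x + (1 + u ^ 2 / 2) * μ + 2 * u * μ * Real.sin (2 * π * x)
        - u ^ 2 / 2 * μ * Real.cos (4 * π * x)) = fun x => x + μ * fA u x := by
      funext x
      have h4 : Real.cos (4*π*x) = 1 - 2 * Real.sin (2*π*x)^2 := by
        rw [show (4:ℝ)*π*x = 2*(2*π*x) by ring, Real.cos_two_mul, Real.cos_sq']
        ring
      rw [h4]; unfold fA; ring
    have hrot : Filter.Tendsto (fun n : ℕ => (fun x => x + μ * fA u x)^[n] 0 / n)
        Filter.atTop (nhds (ρ μ)) := by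
      have := hρ μ hμ
      unfold HasRotNum at this
      rwa [hmap] at this
    set F : ℝ → ℝ := fun x => x + μ * fA u x with hF
    have iter : ∀ n : ℕ, |HH u (F^[n] 0) - HH u 0 - n * (c * μ)| ≤ n * (810 * μ^2) := by
      intro n
      induction n with
      | zero => simp
      | succ n ih =>
        rw [Function.iterate_succ_apply']
        have hstep := HH_step u hu' (F^[n] 0) μ
        have : F (F^[n] 0) = F^[n] 0 + μ * fA u (F^[n] 0) := rfl
        rw [this]
        push_cast
        calc |HH u (F^[n] 0 + μ * fA u (F^[n] 0)) - HH u 0 - (↑n + 1) * (c * μ)|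
            = |(HH u (F^[n] 0 + μ * fA u (F^[n] 0)) - HH u (F^[n] 0) - c * μ)
              + (HH u (F^[n] 0) - HH u 0 - ↑n * (c * μ))| := by ring_nf
          _ ≤ |HH u (F^[n] 0 + μ * fA u (F^[n] 0)) - HH u (F^[n] 0) - c * μ|
              + |HH u (F^[n] 0) - HH u 0 - ↑n * (c * μ)| := abs_add_le _ _
          _ ≤ 810 * μ^2 + ↑n * (810 * μ^2) := add_le_add hstep ih
          _ = (↑n + 1) * (810 * μ^2) := by ring
    have hbound : ∀ n : ℕ, 1 ≤ n → |F^[n] 0 / n - c * μ| ≤ 810 * μ^2 + 4 / n := by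
      intro n hn
      have hn0 : (0:ℝ) < n := by exact_mod_cast hn
      have h1 := iter n
      have h2 := HH_dist u hu' (F^[n] 0)
      have h3 := HH_dist u hu' 0
      have h3' : |HH u 0| ≤ 2 := by simpa using h3
      have hnum : |F^[n] 0 - n * (c * μ)| ≤ n * (810 * μ^2) + 4 := by
        calc |F^[n] 0 - n * (c * μ)|
            = |(F^[n] 0 - HH u (F^[n] 0)) + (HH u (F^[n] 0) - HH u 0 - n * (c * μ)) + HH u 0| := by
              ring_nf
          _ ≤ |F^[n] 0 - HH u (F^[n] 0)| + |HH u (F^[n] 0) - HH u 0 - n * (c * μ)| + |HH u 0| := by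
              exact (abs_add_le _ _).trans (add_le_add_left (abs_add_le _ _) _)
          _ ≤ 2 + n * (810 * μ^2) + 2 := by
              refine add_le_add (add_le_add ?_ h1) h3'
              rw [abs_sub_comm]; exact h2
          _ = n * (810 * μ^2) + 4 := by ring
      have : |F^[n] 0 / n - c * μ| = |F^[n] 0 - n * (c * μ)| / n := by
        have heq : F^[n] 0 / n - c * μ = (F^[n] 0 - n * (c * μ)) / n := by
          field_simp
        rw [heq, abs_div, abs_of_pos hn0]
      rw [this, div_le_iff₀ hn0]
      calc |F^[n] 0 - n * (c * μ)| ≤ n * (810 * μ^2) + 4 := hnum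
        _ = (810 * μ^2 + 4 / n) * n := by field_simp
    have t1 : Filter.Tendsto (fun n : ℕ => |F^[n] 0 / n - c * μ|) Filter.atTop
        (nhds (|ρ μ - c * μ|)) := (hrot.sub_const (c * μ)).abs
    have t2 : Filter.Tendsto (fun n : ℕ => 810 * μ^2 + 4 / (n:ℝ)) Filter.atTop
        (nhds (810 * μ^2 + 0)) :=
      tendsto_const_nhds.add (tendsto_const_div_atTop_nhds_zero_nat 4)
    have := le_of_tendsto_of_tendsto t1 t2 (by
      filter_upwards [Filter.eventually_ge_atTop 1] with n hn
      exact hbound n hn)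
    simpa using this
  have hρ0 : ρ 0 = 0 := by
    have := key 0 (by simpa using hε)
    simp at this
    linarith [abs_nonneg (ρ 0), this]
  rw [hc_eq, hasDerivAt_iff_isLittleO, Asymptotics.isLittleO_iff]
  intro δ hδ
  have hev : ∀ᶠ μ in nhds (0:ℝ), |μ| < min ε (δ / 810) := by
    have : Filter.Tendsto (fun μ : ℝ => |μ|) (nhds 0) (nhds 0) := by
      simpa using continuous_abs.tendsto (0:ℝ)
    exact this.eventually_lt_const (lt_min hε (by positivity))
  filter_upwards [hev] with μ hμ
  have hμε : |μ| < ε := lt_of_lt_of_le hμ (min_le_left _ _)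
  have hμδ : |μ| < δ / 810 := lt_of_lt_of_le hμ (min_le_right _ _)
  have := key μ hμε
  simp only [Real.norm_eq_abs, hρ0, sub_zero, smul_eq_mul]
  calc |ρ μ - μ * c| = |ρ μ - c * μ| := by rw [mul_comm]
    _ ≤ 810 * μ^2 := this
    _ = 810 * |μ| * |μ| := by rw [mul_assoc, ← abs_mul, ← sq, abs_of_nonneg (sq_nonneg μ)]
    _ ≤ δ * |μ| := by nlinarith [abs_nonneg μ]
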